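/- Let a ∈ ℝ with a > 0 and let m ∈ ℂ with Re(m) > −1. Then ∫₀¹ x^m / (a² + (log x)²) dx = (i e^{−i a (1+m)} / (2a)) · ( −Γ(0, −i a (1+m)) + e^{2 i a (1+m)} Γ(0, i a (1+m)) ). -/

import Mathlib

open MeasureTheory
open Set Complex Filter

lemma cexp_aux (c : ℂ) (v : ℝ) : HasDerivAt (fun v : ℝ => Complex.exp (-(c * v))) (-c * Complex.exp (-(c*v))) v := by
  have h1 : HasDerivAt (fun v : ℝ => -(c * (v:ℂ))) (-c) v := by
    exact ((Complex.ofRealCLM.hasDerivAt (x := v)).const_mul c).neg.congr_deriv (by simp)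
  simpa [mul_comm] using h1.cexp

lemma cexp_integrable {c : ℂ} (hc : 0 < c.re) :
    IntegrableOn (fun v : ℝ => Complex.exp (-(c * v))) (Set.Ioi 0) := by
  apply Integrable.mono' (exp_neg_integrableOn_Ioi 0 hc)
  · exact (Complex.continuous_exp.comp (by continuity)).aestronglyMeasurable
  · filter_upwards [ae_restrict_mem measurableSet_Ioi] with v _
    simp [Complex.norm_exp, mul_comm]

lemma cexp_integral {c : ℂ} (hc : 0 < c.re) :
    ∫ v in Set.Ioi (0:ℝ), Complex.exp (-(c * v)) = 1 / c := by
  have hc0 : c ≠ 0 := fun h => by simp [h] at hc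
  have := integral_Ioi_of_hasDerivAt_of_tendsto' (a := 0) (m := 0)
    (f := fun v : ℝ => -Complex.exp (-(c*v)) / c)
    (f' := fun v : ℝ => Complex.exp (-(c * v)))
    (fun x _ => by
      have := ((cexp_aux c x).neg).div_const c
      simpa [neg_mul, mul_div_assoc, mul_comm, mul_div_cancel_left₀ _ hc0] using this)
    (cexp_integrable hc) ?_
  · simpa [neg_div] using this
  · rw [show (0:ℂ) = -0/c by simp]
    apply Tendsto.div_const
    apply Tendsto.neg
    rw [tendsto_zero_iff_norm_tendsto_zero]
    have : ∀ v : ℝ, ‖Complex.exp (-(c*v))‖ = Real.exp (-(c.re*v)) := fun v => by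
      simp [Complex.norm_exp]
    simp_rw [this]
    have h2 : Tendsto (fun v : ℝ => c.re * v) atTop atTop :=
      Tendsto.const_mul_atTop hc tendsto_id
    exact Real.tendsto_exp_atBot.comp (tendsto_neg_atTop_atBot.comp h2)

/-- Laplace transform of cosine. -/
lemma laplace_cos {s : ℂ} (hs : 0 < s.re) (b : ℝ) :
    ∫ v in Set.Ioi (0:ℝ), Complex.exp (-(s * v)) * Complex.cos (b * v)
      = s / (s^2 + (b:ℂ)^2) := by
  have h1 : 0 < (s - b*Complex.I).re := by simpa using hs
  have h2 : 0 < (s + b*Complex.I).re := by simpa using hs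
  have key : ∀ v : ℝ, Complex.exp (-(s*v)) * Complex.cos ((b:ℂ) * v)
      = (Complex.exp (-((s - b*Complex.I)*v)) + Complex.exp (-((s + b*Complex.I)*v)))/2 := by
    intro v
    rw [Complex.cos,
      show -((s - ↑b*Complex.I)*(v:ℂ)) = -(s*↑v) + ↑b*↑v*Complex.I by ring,
      show -((s + ↑b*Complex.I)*(v:ℂ)) = -(s*↑v) + -(↑b*↑v)*Complex.I by ring,
      Complex.exp_add, Complex.exp_add]
    ring
  simp_rw [key]
  rw [integral_div, integral_add (cexp_integrable h1) (cexp_integrable h2),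
    cexp_integral h1, cexp_integral h2]
  have e1 : s - b*Complex.I ≠ 0 := fun h => by simp [h] at h1
  have e2 : s + b*Complex.I ≠ 0 := fun h => by simp [h] at h2
  have e3 : s^2 + (b:ℂ)^2 ≠ 0 := by
    have : s^2 + (b:ℂ)^2 = (s - b*Complex.I) * (s + b*Complex.I) := by
      linear_combination ((b:ℂ)^2) * Complex.I_sq
    rw [this]; exact mul_ne_zero e1 e2
  field_simp
  linear_combination 2 * s * (b:ℂ)^2 * Complex.I_sq

lemma image_exp_neg : (fun u : ℝ => Real.exp (-u)) '' Set.Ioi 0 = Set.Ioo 0 1 := by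
  ext x
  constructor
  · rintro ⟨u, hu, rfl⟩
    exact ⟨Real.exp_pos _, by rw [show (1:ℝ) = Real.exp 0 by simp]; exact Real.exp_lt_exp.2 (by linarith [hu.out])⟩
  · rintro ⟨h0, h1⟩
    exact ⟨-Real.log x, by simpa using Real.log_neg h0 h1, by simp [Real.exp_log h0]⟩

lemma stepA (a : ℝ) (m : ℂ) :
    (∫ x in (0:ℝ)..1, (x:ℂ) ^ m / ((a:ℂ) ^ 2 + (Complex.log (x:ℂ)) ^ 2))
    = ∫ u in Set.Ioi (0:ℝ), Complex.exp (-((1+m) * u)) / ((a:ℂ)^2 + (u:ℂ)^2) := by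
  rw [intervalIntegral.integral_of_le zero_le_one, integral_Ioc_eq_integral_Ioo, ← image_exp_neg,
    integral_image_eq_integral_abs_deriv_smul measurableSet_Ioi
      (f' := fun u => -Real.exp (-u))
      (fun x _ => ((hasDerivAt_neg x).exp).hasDerivWithinAt.congr_deriv (by ring))
      (fun x _ y _ h => by
        have := Real.exp_injective h
        linarith)]
  apply setIntegral_congr_fun measurableSet_Ioi
  intro u hu
  have hpos : (0:ℝ) < Real.exp (-u) := Real.exp_pos _
  have hne : ((Real.exp (-u) : ℝ) : ℂ) ≠ 0 := by exact_mod_cast hpos.ne'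
  have hlog : Complex.log ((Real.exp (-u) : ℝ) : ℂ) = ((-u : ℝ) : ℂ) := by
    rw [← Complex.ofReal_log hpos.le, Real.log_exp]
  have hpow : ((Real.exp (-u) : ℝ) : ℂ) ^ m = Complex.exp (((-u : ℝ) : ℂ) * m) := by
    rw [Complex.cpow_def_of_ne_zero hne, hlog]
  simp only [abs_neg, abs_of_pos hpos, hpow, hlog]
  rw [real_smul, Complex.ofReal_exp, mul_div_assoc', ← Complex.exp_add]
  push_cast
  ring_nf
lemma integrable_inv_shift {z : ℂ} (hz : z.im ≠ 0) :
    IntegrableOn (fun t : ℝ => Complex.exp (-(t:ℂ)) * ((t:ℂ)+z)⁻¹) (Set.Ioi 0) := by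
  have hb : ∀ t : ℝ, ((t:ℂ)+z) ≠ 0 := fun t h => hz (by simpa using congrArg Complex.im h)
  have himpos : 0 < |z.im| := abs_pos.2 hz
  have hg : IntegrableOn (fun t : ℝ => Real.exp ((-1)*t) * |z.im|⁻¹) (Set.Ioi 0) :=
    (exp_neg_integrableOn_Ioi 0 one_pos).mul_const _
  apply Integrable.mono' hg
  · apply Continuous.aestronglyMeasurable
    exact (Complex.continuous_exp.comp (Complex.continuous_ofReal.neg)).mul
      ((Complex.continuous_ofReal.add continuous_const).inv₀ hb)
  · filter_upwards [ae_restrict_mem measurableSet_Ioi] with t _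
    rw [norm_mul, norm_inv]
    have h1 : ‖Complex.exp (-(t:ℂ))‖ = Real.exp ((-1)*t) := by
      simp [Complex.norm_exp]
    rw [h1]
    apply mul_le_mul_of_nonneg_left _ (Real.exp_pos _).le
    apply inv_anti₀ himpos
    have := Complex.abs_im_le_norm ((t:ℂ)+z)
    simpa using this


/-- Upper incomplete gamma function: `Γ(s, z) = e^{-z} ∫₀^∞ e^{-t} (t + z)^(s-1) dt`,
with principal-branch complex powers. -/
noncomputable def uGamma (s z : ℂ) : ℂ :=
  Complex.exp (-z) * ∫ t in Set.Ioi (0:ℝ), Complex.exp (-(t:ℂ)) * ((t:ℂ) + z) ^ (s - 1)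

theorem stmt2 (a : ℝ) (ha : 0 < a) (m : ℂ) (hm : -1 < m.re) :
    (∫ x in (0:ℝ)..1, (x:ℂ) ^ m / ((a:ℂ) ^ 2 + (Complex.log (x:ℂ)) ^ 2))
    = Complex.I * Complex.exp (-Complex.I * (a:ℂ) * (1 + m)) / (2 * (a:ℂ))
        * (-(uGamma 0 (-Complex.I * (a:ℂ) * (1 + m)))
            + Complex.exp (2 * Complex.I * (a:ℂ) * (1 + m))
              * uGamma 0 (Complex.I * (a:ℂ) * (1 + m))) := by
  have hG : ∀ z : ℂ, uGamma 0 z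
      = Complex.exp (-z) * ∫ t in Set.Ioi (0:ℝ), Complex.exp (-(t:ℂ)) * ((t:ℂ)+z)⁻¹ := by
    intro z
    unfold uGamma
    norm_num [cpow_neg_one]
  set s : ℂ := 1 + m with hs_def
  have hsre : 0 < s.re := by
    simp only [hs_def, Complex.add_re, Complex.one_re]; linarith
  have hs0 : s ≠ 0 := fun h => by simp [h] at hsre
  have haC : (a:ℂ) ≠ 0 := by exact_mod_cast ha.ne'
  set w : ℂ := Complex.I * a * s with hw
  have hwim : w.im = a * s.re := by
    simp [hw, Complex.mul_im, Complex.mul_re]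
  have hwpos : 0 < w.im := by rw [hwim]; positivity
  have hwim0 : w.im ≠ 0 := hwpos.ne'
  have hwim0' : (-w).im ≠ 0 := by simpa using hwim0
  have htw : ∀ t : ℝ, ((t:ℂ)+w) ≠ 0 := fun t h => hwim0 (by simpa using congrArg Complex.im h)
  have htw' : ∀ t : ℝ, ((t:ℂ)+-w) ≠ 0 := fun t h => hwim0' (by simpa using congrArg Complex.im h)
  have hDne : ∀ t : ℝ, (t:ℂ)^2 - w^2 ≠ 0 := by
    intro t
    rw [show (t:ℂ)^2 - w^2 = ((t:ℂ)+w)*((t:ℂ)+-w) by ring]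
    exact mul_ne_zero (htw t) (htw' t)
  -- Step B : RHS = s * G
  set G : ℂ := ∫ t in Set.Ioi (0:ℝ), Complex.exp (-(t:ℂ)) * ((t:ℂ)^2 - w^2)⁻¹ with hGdef
  have e1 : -Complex.I * (a:ℂ) * s = -w := by rw [hw]; ring
  have e2 : Complex.I * (a:ℂ) * s = w := by rw [hw]
  have e3 : 2*Complex.I*(a:ℂ)*s = 2*w := by rw [hw]; ring
  rw [e1, e3, hG, hG]
  have hFsub : (∫ t in Set.Ioi (0:ℝ), Complex.exp (-(t:ℂ)) * ((t:ℂ)+w)⁻¹)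
      - (∫ t in Set.Ioi (0:ℝ), Complex.exp (-(t:ℂ)) * ((t:ℂ)+-w)⁻¹) = (-2*w) * G := by
    rw [← integral_sub (integrable_inv_shift hwim0) (integrable_inv_shift hwim0'), hGdef,
      ← integral_const_mul]
    apply setIntegral_congr_fun measurableSet_Ioi
    intro t _
    have h1 := htw t
    have h2 := htw' t
    have h3 := hDne t
    field_simp
    ring
  have hEw := Complex.exp_ne_zero w
  have hexp : ∀ X Y : ℂ,
      Complex.I * Complex.exp (-w) / (2*(a:ℂ)) * (-(Complex.exp (-(-w)) * X)
        + Complex.exp (2*w) * (Complex.exp (-w) * Y))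
      = Complex.I / (2*(a:ℂ)) * (Y - X) := by
    intro X Y
    rw [Complex.exp_neg, neg_neg,
      show Complex.exp (2*w) = Complex.exp w * Complex.exp w by rw [← Complex.exp_add, two_mul]]
    field_simp
    ring
  rw [hexp, hFsub]
  have hc : Complex.I / (2*(a:ℂ)) * (-2*w) = s := by
    rw [hw]
    field_simp
    linear_combination (-1:ℂ) * Complex.I_sq
  rw [show Complex.I / (2*(a:ℂ)) * ((-2*w) * G) = (Complex.I / (2*(a:ℂ)) * (-2*w)) * G by ring,
    hc]
  -- Step C : s * G = ∫ v, exp(-(s v)) / (a² + v²)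
  have hinner : ∀ t : ℝ, ((t:ℂ)^2 - w^2)⁻¹
      = ((a:ℂ)^2*s)⁻¹ * ∫ v in Set.Ioi (0:ℝ),
          Complex.exp (-(s * v)) * Complex.cos (((t/a : ℝ):ℂ) * v) := by
    intro t
    rw [laplace_cos hsre (t/a)]
    have hq : s^2 + ((t/a : ℝ):ℂ)^2 = ((t:ℂ)^2 - w^2)/(a:ℂ)^2 := by
      push_cast
      rw [hw]
      field_simp
      linear_combination ((a:ℂ)^2*(1+m)^2) * Complex.I_sq
    rw [hq]
    have := hDne t
    field_simp
  set F : ℝ → ℝ → ℂ := fun t v =>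
    Complex.exp (-(t:ℂ)) * (Complex.exp (-(s * v)) * Complex.cos (((t/a : ℝ):ℂ) * v)) with hF
  have hGJ : G = ((a:ℂ)^2*s)⁻¹ * ∫ t in Set.Ioi (0:ℝ), ∫ v in Set.Ioi (0:ℝ), F t v := by
    rw [hGdef, ← integral_const_mul]
    apply setIntegral_congr_fun measurableSet_Ioi
    intro t _
    simp only [hF]
    rw [hinner t, integral_const_mul]
    ring
  have hFprod : Integrable (Function.uncurry F)
      ((volume.restrict (Set.Ioi 0)).prod (volume.restrict (Set.Ioi 0))) := by
    have hg : Integrable (fun p : ℝ × ℝ => Real.exp ((-1)*p.1) * Real.exp (-(s.re) * p.2))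
        ((volume.restrict (Set.Ioi 0)).prod (volume.restrict (Set.Ioi 0))) :=
      Integrable.mul_prod (exp_neg_integrableOn_Ioi 0 one_pos) (exp_neg_integrableOn_Ioi 0 hsre)
    apply Integrable.mono' hg
    · apply Continuous.aestronglyMeasurable
      apply Continuous.mul
      · exact Complex.continuous_exp.comp (Complex.continuous_ofReal.comp continuous_fst).neg
      · apply Continuous.mul
        · exact Complex.continuous_exp.comp
            ((continuous_const.mul (Complex.continuous_ofReal.comp continuous_snd)).neg)
        · exact Complex.continuous_cos.comp
            ((Complex.continuous_ofReal.comp ((continuous_fst.div_const a))).mul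
              (Complex.continuous_ofReal.comp continuous_snd))
    · apply Filter.Eventually.of_forall
      rintro ⟨t, v⟩
      simp only [Function.uncurry, hF]
      rw [show ((t/a : ℝ):ℂ) * (v:ℂ) = ((t/a*v : ℝ):ℂ) from by push_cast; ring,
        norm_mul, norm_mul]
      have h1 : ‖Complex.exp (-(t:ℂ))‖ = Real.exp ((-1)*t) := by simp [Complex.norm_exp]
      have h2 : ‖Complex.exp (-(s * (v:ℂ)))‖ = Real.exp (-(s.re) * v) := by
        simp [Complex.norm_exp]
      have h3 : ‖Complex.cos (((t/a*v : ℝ)):ℂ)‖ ≤ 1 := by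
        rw [← Complex.ofReal_cos, Complex.norm_real, Real.norm_eq_abs]
        exact Real.abs_cos_le_one _
      rw [h1, h2]
      have := mul_le_mul_of_nonneg_left
        (mul_le_mul_of_nonneg_left h3 (Real.exp_pos (-(s.re)*v)).le)
        (Real.exp_pos ((-1)*t)).le
      simpa using this
  have hswap : (∫ t in Set.Ioi (0:ℝ), ∫ v in Set.Ioi (0:ℝ), F t v)
      = ∫ v in Set.Ioi (0:ℝ), ∫ t in Set.Ioi (0:ℝ), F t v := integral_integral_swap hFprod
  have hav : ∀ v : ℝ, ((a:ℂ)^2 + (v:ℂ)^2) ≠ 0 := by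
    intro v h
    have h2 : ((a^2 + v^2 : ℝ) : ℂ) = 0 := by push_cast; linear_combination h
    rw [Complex.ofReal_eq_zero] at h2
    nlinarith
  have houter : ∀ v : ℝ, (∫ t in Set.Ioi (0:ℝ), F t v)
      = Complex.exp (-(s * v)) * ((a:ℂ)^2 * ((a:ℂ)^2 + (v:ℂ)^2)⁻¹) := by
    intro v
    have hpt : ∀ t : ℝ, F t v
        = Complex.exp (-(s * v)) * (Complex.exp (-((1:ℂ) * t)) * Complex.cos (((v/a : ℝ):ℂ) * t)) := by
      intro t
      rw [hF]
      simp only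
      rw [show ((t/a : ℝ):ℂ) * (v:ℂ) = ((v/a : ℝ):ℂ) * (t:ℂ) by push_cast; ring]
      ring_nf
    simp_rw [hpt]
    rw [integral_const_mul, laplace_cos one_pos (v/a)]
    congr 1
    have h1 : ((1:ℂ))^2 + ((v/a : ℝ):ℂ)^2 ≠ 0 := by
      rw [show ((1:ℂ))^2 + ((v/a : ℝ):ℂ)^2 = ((a:ℂ)^2 + (v:ℂ)^2)/(a:ℂ)^2 by
        push_cast; field_simp]
      exact div_ne_zero (hav v) (pow_ne_zero 2 haC)
    have h2 := hav v
    push_cast at h1 ⊢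
    field_simp
    try ring
  have hchain : s * G = ∫ v in Set.Ioi (0:ℝ),
      Complex.exp (-(s * v)) * ((a:ℂ)^2 + (v:ℂ)^2)⁻¹ := by
    rw [hGJ, hswap]
    rw [show (∫ v in Set.Ioi (0:ℝ), ∫ t in Set.Ioi (0:ℝ), F t v)
        = (a:ℂ)^2 * ∫ v in Set.Ioi (0:ℝ),
            Complex.exp (-(s * v)) * ((a:ℂ)^2 + (v:ℂ)^2)⁻¹ by
      rw [← integral_const_mul]
      apply setIntegral_congr_fun measurableSet_Ioi
      intro v _
      dsimp only
      rw [houter v]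
      ring]
    field_simp
  rw [hchain, stepA a m]
  apply setIntegral_congr_fun measurableSet_Ioi
  intro u _
  dsimp only
  rw [div_eq_mul_inv]
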